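/- Let G be a finite 3-pyramidal group whose order is congruent to 2 modulo 4 (i.e., |G| = 2d with d odd). Let K be the subgroup of G generated by the involutions of G and let C be the centralizer of K in G. Then K is isomorphic to the symmetric group S_3 and G is isomorphic to the direct product C × K. -/

import Mathlib

namespace TP
variable {G : Type*} [Group G]

lemma sq {t : G} (h : orderOf t = 2) : t * t = 1 := by
  have h2 := pow_orderOf_eq_one t
  rwa [h, pow_two] at h2

lemma ne_one {t : G} (h : orderOf t = 2) : t ≠ 1 := by
  rintro rfl; simp at h

lemma order_two {t : G} (h1 : t * t = 1) (h2 : t ≠ 1) : orderOf t = 2 := by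
  haveI : Fact (Nat.Prime 2) := ⟨Nat.prime_two⟩
  exact orderOf_eq_prime (by rwa [pow_two]) h2

lemma self_inv {t : G} (h1 : t * t = 1) : t⁻¹ = t := inv_eq_of_mul_eq_one_right h1

lemma noKlein [Finite G] (hord : Nat.card G % 4 = 2) {t u : G}
    (ht : orderOf t = 2) (hu : orderOf u = 2) (hne : t ≠ u) : t * u ≠ u * t := by
  intro hc
  have ht2 := sq ht; have hu2 := sq hu
  have ht1 := ne_one ht; have hu1 := ne_one hu
  have htu1 : t * u ≠ 1 := by
    intro h
    exact hne (by rw [← self_inv hu2]; exact eq_inv_of_mul_eq_one_left h)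
  have r1 : ∀ x : G, t * (t * x) = x := fun x => by rw [← mul_assoc, ht2, one_mul]
  have r2 : ∀ x : G, u * (u * x) = x := fun x => by rw [← mul_assoc, hu2, one_mul]
  have r4 : u * t = t * u := hc.symm
  have r3 : ∀ x : G, u * (t * x) = t * (u * x) := fun x => by
    rw [← mul_assoc, r4, mul_assoc]
  have hmem : ∀ x ∈ ({1, t, u, t*u} : Set G), ∀ y ∈ ({1, t, u, t*u} : Set G),
      x * y ∈ ({1, t, u, t*u} : Set G) := by
    intro x hx y hy
    simp only [Set.mem_insert_iff, Set.mem_singleton_iff] at hx hy ⊢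
    rcases hx with rfl|rfl|rfl|rfl <;> rcases hy with rfl|rfl|rfl|rfl <;>
      simp only [one_mul, mul_one, mul_assoc, r1, r2, r3, r4, ht2, hu2] <;> tauto
  have hinvmem : ∀ x ∈ ({1, t, u, t*u} : Set G), x⁻¹ ∈ ({1, t, u, t*u} : Set G) := by
    intro x hx
    simp only [Set.mem_insert_iff, Set.mem_singleton_iff] at hx ⊢
    have htu2 : (t*u) * (t*u) = 1 := by
      simp only [mul_assoc, r3, r1, r2, ht2, hu2, mul_one]
    rcases hx with rfl|rfl|rfl|rfl
    · left; exact inv_one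
    · right; left; exact self_inv ht2
    · right; right; left; exact self_inv hu2
    · right; right; right; exact self_inv htu2
  let V : Subgroup G :=
    { carrier := {1, t, u, t*u}
      one_mem' := by left; rfl
      mul_mem' := fun hx hy => hmem _ hx _ hy
      inv_mem' := fun hx => hinvmem _ hx }
  have hVcard : Nat.card V = 4 := by
    have e : V ≃ ({1, t, u, t*u} : Set G) := Equiv.refl _
    rw [Nat.card_congr e, Nat.card_coe_set_eq]
    have d1 : t ≠ t * u := fun h => hu1 (left_eq_mul.mp h)
    have d2 : u ≠ t * u := fun h => ht1 (right_eq_mul.mp h)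
    rw [Set.ncard_insert_of_notMem (by
          simp only [Set.mem_insert_iff, Set.mem_singleton_iff, not_or]
          exact ⟨fun h => ht1 h.symm, fun h => hu1 h.symm, fun h => htu1 h.symm⟩) (Set.toFinite _),
        Set.ncard_insert_of_notMem (by
          simp only [Set.mem_insert_iff, Set.mem_singleton_iff, not_or]
          exact ⟨hne, d1⟩) (Set.toFinite _),
        Set.ncard_insert_of_notMem (by simpa using d2) (Set.toFinite _),
        Set.ncard_singleton]
  have hdvd := Subgroup.card_subgroup_dvd_card V
  rw [hVcard] at hdvd
  omega

/-- Conjugation action of `G` on a conjugation-stable subset `S`. -/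
def conjHom (S : Set G) (hS : ∀ g : G, ∀ x ∈ S, g * x * g⁻¹ ∈ S) :
    G →* Equiv.Perm S where
  toFun g :=
    { toFun := fun x => ⟨g * x * g⁻¹, hS g x x.2⟩
      invFun := fun x => ⟨g⁻¹ * x * g, by
        have := hS g⁻¹ x x.2; rwa [inv_inv] at this⟩
      left_inv := fun x => by
        apply Subtype.ext; simp [mul_assoc]
      right_inv := fun x => by
        apply Subtype.ext; simp [mul_assoc] }
  map_one' := by
    apply Equiv.ext; intro x; apply Subtype.ext; simp
  map_mul' g h := by
    apply Equiv.ext; intro x; apply Subtype.ext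
    simp [Equiv.Perm.mul_apply, mul_assoc]

end TP

/-- A finite group is 3-pyramidal if it has exactly three involutions,
which are all conjugate to each other. -/
def IsThreePyramidal (G : Type*) [Group G] : Prop :=
  Nat.card {g : G | orderOf g = 2} = 3 ∧
    ∀ i j : G, orderOf i = 2 → orderOf j = 2 → IsConj i j

set_option maxHeartbeats 2000000 in
theorem stmt_2 {G : Type*} [Group G] [Finite G] (hG : IsThreePyramidal G)
    (hord : Nat.card G % 4 = 2)
    (K C : Subgroup G)
    (hK : K = Subgroup.closure {g : G | orderOf g = 2})
    (hC : C = Subgroup.centralizer (K : Set G)) :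
    Nonempty (K ≃* Equiv.Perm (Fin 3)) ∧ Nonempty (G ≃* C × K) := by
  classical
  obtain ⟨hcard3, -⟩ := hG
  have hI3 : ({g : G | orderOf g = 2}).ncard = 3 := by
    rw [← Nat.card_coe_set_eq]; exact hcard3
  obtain ⟨a, b, c, hab, hac, hbc, hIabc⟩ := Set.ncard_eq_three.mp hI3
  have ha : orderOf a = 2 := by
    have : a ∈ {g : G | orderOf g = 2} := by rw [hIabc]; exact Set.mem_insert _ _
    exact this
  have hb : orderOf b = 2 := by
    have : b ∈ {g : G | orderOf g = 2} := by
      rw [hIabc]; exact Set.mem_insert_iff.mpr (Or.inr (Set.mem_insert _ _))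
    exact this
  have ha2 := TP.sq ha; have hb2 := TP.sq hb
  have ha1 := TP.ne_one ha; have hb1 := TP.ne_one hb
  have hainv := TP.self_inv ha2
  have hbinv := TP.self_inv hb2
  have ra : ∀ x : G, a * (a * x) = x := fun x => by rw [← mul_assoc, ha2, one_mul]
  have hnc : a * b ≠ b * a := TP.noKlein hord ha hb hab
  obtain ⟨ρ, hρ⟩ : ∃ ρ : G, ρ = a * b := ⟨a * b, rfl⟩
  have hba : b * a = ρ⁻¹ := by rw [hρ, mul_inv_rev, hainv, hbinv]
  have hb_eq : a * ρ = b := by rw [hρ, ra]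
  have hρ1 : ρ ≠ 1 := by
    rw [hρ]; intro h
    exact hab ((eq_inv_of_mul_eq_one_left h).trans hbinv)
  have hρρ1 : ρ * ρ ≠ 1 := by
    intro h
    apply hnc
    have h1 : ρ⁻¹ = ρ := inv_eq_of_mul_eq_one_right h
    rw [← hρ, hba]
    exact h1.symm
  have rb : ∀ x : G, b * (b * x) = x := fun x => by rw [← mul_assoc, hb2, one_mul]
  have hc3sq : (a * (ρ * ρ)) * (a * (ρ * ρ)) = 1 := by
    rw [hρ]; simp only [mul_assoc, ra, rb, ha2, hb2, mul_one]
  have hc3ne1 : a * (ρ * ρ) ≠ 1 := by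
    intro h
    have hA : ρ * ρ = a := by have := congrArg (a * ·) h; simpa [ra] using this
    apply hnc
    rw [← hb_eq, ← hA]; group
  have hc3o : orderOf (a * (ρ * ρ)) = 2 := TP.order_two hc3sq hc3ne1
  have hc3a : a * (ρ * ρ) ≠ a := by
    intro h
    have h2 : ρ * ρ = 1 := by have := congrArg (a * ·) h; simpa [ra, ha2] using this
    exact hρρ1 h2
  have hc3b : a * (ρ * ρ) ≠ b := by
    intro h
    rw [← hb_eq] at h
    have h2 : ρ * ρ = ρ := by have := congrArg (a * ·) h; simpa [ra] using this
    exact hρ1 (mul_left_cancel (a := ρ) (h2.trans (mul_one ρ).symm))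
  have hIset : {g : G | orderOf g = 2} = {a, b, a * (ρ * ρ)} := by
    refine (Set.eq_of_subset_of_ncard_le ?_ ?_ (Set.toFinite _)).symm
    · intro x hx
      simp only [Set.mem_insert_iff, Set.mem_singleton_iff] at hx
      rcases hx with rfl|rfl|rfl
      exacts [ha, hb, hc3o]
    · rw [hI3, Set.ncard_eq_three.mpr ⟨a, b, a*(ρ*ρ), hab, Ne.symm hc3a, Ne.symm hc3b, rfl⟩]
  -- ρ has order 3
  have hρ3 : ρ * (ρ * ρ) = 1 := by
    have hx2 : (a * (ρ * (ρ * ρ))) * (a * (ρ * (ρ * ρ))) = 1 := by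
      rw [hρ]; simp only [mul_assoc, ra, rb, ha2, hb2, mul_one]
    by_cases hx1 : a * (ρ * (ρ * ρ)) = 1
    · exfalso
      have hA : ρ * (ρ * ρ) = a := by have := congrArg (a * ·) hx1; simpa [ra] using this
      apply hnc
      rw [← hb_eq, ← hA]; group
    · have hxI : a * (ρ * (ρ * ρ)) ∈ {g : G | orderOf g = 2} := TP.order_two hx2 hx1
      rw [hIset] at hxI
      simp only [Set.mem_insert_iff, Set.mem_singleton_iff] at hxI
      rcases hxI with h|h|h
      · have := congrArg (a * ·) h; simpa [ra, ha2] using this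
      · exfalso
        rw [← hb_eq] at h
        have h2 : ρ * (ρ * ρ) = ρ := by have := congrArg (a * ·) h; simpa [ra] using this
        exact hρρ1 (mul_left_cancel (a := ρ) (h2.trans (mul_one ρ).symm))
      · exfalso
        have h2 : ρ * (ρ * ρ) = ρ * ρ := by have := congrArg (a * ·) h; simpa [ra] using this
        have h3 : ρ * ρ = ρ := mul_left_cancel h2
        exact hρ1 (mul_left_cancel (a := ρ) (h3.trans (mul_one ρ).symm))
  have hρinv : ρ⁻¹ = ρ * ρ := inv_eq_of_mul_eq_one_right hρ3
  have r3 : ∀ x : G, ρ * (ρ * (ρ * x)) = x := fun x => by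
    rw [show ρ * (ρ * (ρ * x)) = (ρ * (ρ * ρ)) * x by group, hρ3, one_mul]
  have hra : ρ * a = a * (ρ * ρ) := by
    rw [← hρinv, ← hba, hρ]
    group
  have rra : ∀ x : G, ρ * (a * x) = a * (ρ * (ρ * x)) := fun x => by
    rw [← mul_assoc, hra, mul_assoc, mul_assoc]
  have hrra : (ρ * ρ) * a = a * ρ := by
    rw [mul_assoc, hra, rra, r3]
  -- The subgroup K is contained in the 6-element set T
  have hTa : ∀ y ∈ ({1, ρ, ρ*ρ, a, a*ρ, a*(ρ*ρ)} : Set G),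
      a * y ∈ ({1, ρ, ρ*ρ, a, a*ρ, a*(ρ*ρ)} : Set G) := by
    intro y hy
    simp only [Set.mem_insert_iff, Set.mem_singleton_iff] at hy ⊢
    rcases hy with rfl|rfl|rfl|rfl|rfl|rfl
    · rw [mul_one]; tauto
    · tauto
    · tauto
    · rw [ha2]; tauto
    · rw [ra]; tauto
    · rw [ra]; tauto
  have hTρ : ∀ y ∈ ({1, ρ, ρ*ρ, a, a*ρ, a*(ρ*ρ)} : Set G),
      ρ * y ∈ ({1, ρ, ρ*ρ, a, a*ρ, a*(ρ*ρ)} : Set G) := by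
    intro y hy
    simp only [Set.mem_insert_iff, Set.mem_singleton_iff] at hy ⊢
    rcases hy with rfl|rfl|rfl|rfl|rfl|rfl
    · rw [mul_one]; tauto
    · tauto
    · rw [hρ3]; tauto
    · rw [hra]; tauto
    · rw [rra, hρ3, mul_one]; tauto
    · rw [rra, r3]; tauto
  have hKT : ∀ g ∈ K, g ∈ ({1, ρ, ρ*ρ, a, a*ρ, a*(ρ*ρ)} : Set G) := by
    intro g hg
    rw [hK, hIset] at hg
    induction hg using Subgroup.closure_induction_left with
    | one => left; rfl
    | mul_left x hx y hy ih =>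
        simp only [Set.mem_insert_iff, Set.mem_singleton_iff] at hx
        rcases hx with rfl|rfl|rfl
        · exact hTa _ ih
        · rw [← hb_eq, mul_assoc]; exact hTa _ (hTρ _ ih)
        · rw [mul_assoc, mul_assoc]; exact hTa _ (hTρ _ (hTρ _ ih))
    | inv_mul_cancel x hx y hy ih =>
        simp only [Set.mem_insert_iff, Set.mem_singleton_iff] at hx
        rcases hx with rfl|rfl|rfl
        · rw [hainv]; exact hTa _ ih
        · rw [hbinv, ← hb_eq, mul_assoc]; exact hTa _ (hTρ _ ih)
        · rw [TP.self_inv hc3sq, mul_assoc, mul_assoc]; exact hTa _ (hTρ _ (hTρ _ ih))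
  -- elements of T commuting with both a and b are trivial
  have hcent1 : ∀ g ∈ ({1, ρ, ρ*ρ, a, a*ρ, a*(ρ*ρ)} : Set G),
      g * a = a * g → g * b = b * g → g = 1 := by
    intro g hg h1 h2
    simp only [Set.mem_insert_iff, Set.mem_singleton_iff] at hg
    rcases hg with rfl|rfl|rfl|rfl|rfl|rfl
    · rfl
    · exfalso
      have h3 := mul_left_cancel (h1.symm.trans hra)
      exact hρ1 (mul_left_cancel ((mul_one _).trans h3)).symm
    · exfalso
      have h4 := hrra.symm.trans h1
      have h3 := mul_left_cancel h4
      exact hρ1 (mul_left_cancel ((mul_one _).trans h3)).symm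
    · exact absurd h2 hnc
    · exfalso
      rw [hb_eq] at h1
      exact hnc h1.symm
    · exact absurd h1 (TP.noKlein hord hc3o ha hc3a)
  -- the conjugation permutation representation
  have hstab : ∀ g : G, ∀ x ∈ {g : G | orderOf g = 2}, g * x * g⁻¹ ∈ {g : G | orderOf g = 2} := by
    intro g x hx
    show orderOf _ = 2
    have hcg : g * x * g⁻¹ = (MulAut.conj g) x := rfl
    rw [hcg, MulEquiv.orderOf_eq]
    exact hx
  set φ : G →* Equiv.Perm ↥{g : G | orderOf g = 2} := TP.conjHom _ hstab with hφdef
  have hφap : ∀ (g : G) (x : ↥{g : G | orderOf g = 2}), ((φ g) x : G) = g * x * g⁻¹ :=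
    fun g x => rfl
  have haI : a ∈ {g : G | orderOf g = 2} := ha
  have hbI : b ∈ {g : G | orderOf g = 2} := hb
  have hc3I : a * (ρ * ρ) ∈ {g : G | orderOf g = 2} := hc3o
  set x1 : ↥{g : G | orderOf g = 2} := ⟨a, haI⟩ with hx1def
  set x2 : ↥{g : G | orderOf g = 2} := ⟨b, hbI⟩ with hx2def
  set x3 : ↥{g : G | orderOf g = 2} := ⟨a * (ρ * ρ), hc3I⟩ with hx3def
  have hx12 : x1 ≠ x2 := fun h => hab (congrArg Subtype.val h)
  have hx13 : x1 ≠ x3 := fun h => hc3a (congrArg Subtype.val h).symm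
  have hx23 : x2 ≠ x3 := fun h => hc3b (congrArg Subtype.val h).symm
  have hmemx : ∀ z : ↥{g : G | orderOf g = 2}, z = x1 ∨ z = x2 ∨ z = x3 := by
    rintro ⟨v, hv⟩
    have hv' : v ∈ {g : G | orderOf g = 2} := hv
    rw [hIset] at hv'
    simp only [Set.mem_insert_iff, Set.mem_singleton_iff] at hv'
    rcases hv' with rfl|rfl|rfl
    · exact Or.inl (Subtype.ext rfl)
    · exact Or.inr (Or.inl (Subtype.ext rfl))
    · exact Or.inr (Or.inr (Subtype.ext rfl))
  have hφa : φ a = Equiv.swap x2 x3 := by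
    apply Equiv.ext; intro z
    rcases hmemx z with rfl|rfl|rfl
    · rw [Equiv.swap_apply_of_ne_of_ne hx12 hx13]
      apply Subtype.ext
      rw [hφap]
      show a * a * a⁻¹ = a
      rw [ha2, one_mul, hainv]
    · rw [Equiv.swap_apply_left]
      apply Subtype.ext
      rw [hφap]
      show a * b * a⁻¹ = a * (ρ * ρ)
      rw [hainv, ← hb_eq, ra]
      exact hra
    · rw [Equiv.swap_apply_right]
      apply Subtype.ext
      rw [hφap]
      show a * (a * (ρ * ρ)) * a⁻¹ = b
      rw [hainv, ra, hrra, hb_eq]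
  have hφb : φ b = Equiv.swap x1 x3 := by
    apply Equiv.ext; intro z
    rcases hmemx z with rfl|rfl|rfl
    · rw [Equiv.swap_apply_left]
      apply Subtype.ext
      rw [hφap]
      show b * a * b⁻¹ = a * (ρ * ρ)
      rw [hbinv, ← hb_eq]
      simp only [mul_assoc, ra, ha2, rra, hra, r3, hρ3, mul_one, one_mul]
    · rw [Equiv.swap_apply_of_ne_of_ne (Ne.symm hx12) hx23]
      apply Subtype.ext
      rw [hφap]
      show b * b * b⁻¹ = b
      rw [hb2, one_mul, hbinv]
    · rw [Equiv.swap_apply_right]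
      apply Subtype.ext
      rw [hφap]
      show b * (a * (ρ * ρ)) * b⁻¹ = a
      rw [hbinv, ← hb_eq]
      simp only [mul_assoc, ra, ha2, rra, hra, r3, hρ3, mul_one, one_mul]
  have hφc3 : φ (a * (ρ * ρ)) = Equiv.swap x1 x2 := by
    apply Equiv.ext; intro z
    rcases hmemx z with rfl|rfl|rfl
    · rw [Equiv.swap_apply_left]
      apply Subtype.ext
      rw [hφap]
      show (a * (ρ * ρ)) * a * (a * (ρ * ρ))⁻¹ = b
      rw [TP.self_inv hc3sq, ← hb_eq]
      simp only [mul_assoc, ra, ha2, rra, hra, r3, hρ3, mul_one, one_mul]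
    · rw [Equiv.swap_apply_right]
      apply Subtype.ext
      rw [hφap]
      show (a * (ρ * ρ)) * b * (a * (ρ * ρ))⁻¹ = a
      rw [TP.self_inv hc3sq, ← hb_eq]
      simp only [mul_assoc, ra, ha2, rra, hra, r3, hρ3, mul_one, one_mul]
    · rw [Equiv.swap_apply_of_ne_of_ne (Ne.symm hx13) (Ne.symm hx23)]
      apply Subtype.ext
      rw [hφap]
      show (a * (ρ * ρ)) * (a * (ρ * ρ)) * (a * (ρ * ρ))⁻¹ = a * (ρ * ρ)
      rw [hc3sq, one_mul, TP.self_inv hc3sq]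
  have haK : a ∈ K := by rw [hK]; exact Subgroup.subset_closure ha
  have hbK : b ∈ K := by rw [hK]; exact Subgroup.subset_closure hb
  have hc3K : a * (ρ * ρ) ∈ K := by rw [hK]; exact Subgroup.subset_closure hc3o
  set ψ : K →* Equiv.Perm ↥{g : G | orderOf g = 2} := φ.comp K.subtype with hψdef
  have hψinj : Function.Injective ψ := by
    apply (injective_iff_map_eq_one ψ).mpr
    intro k hk
    have h1' : ((φ (k : G)) x1 : G) = a := by
      have : ψ k x1 = x1 := by rw [hk]; rfl
      exact congrArg Subtype.val this
    have h1'' : (k : G) * a * (k : G)⁻¹ = a := h1'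
    have h1 : (k : G) * a = a * (k : G) := mul_inv_eq_iff_eq_mul.mp h1''
    have h2' : ((φ (k : G)) x2 : G) = b := by
      have : ψ k x2 = x2 := by rw [hk]; rfl
      exact congrArg Subtype.val this
    have h2'' : (k : G) * b * (k : G)⁻¹ = b := h2'
    have h2 : (k : G) * b = b * (k : G) := mul_inv_eq_iff_eq_mul.mp h2''
    exact Subtype.ext (hcent1 _ (hKT _ k.2) h1 h2)
  have hψrange : ∀ σ : Equiv.Perm ↥{g : G | orderOf g = 2}, σ ∈ ψ.range := by
    have hswap : {σ : Equiv.Perm ↥{g : G | orderOf g = 2} | σ.IsSwap} ⊆ ↑ψ.range := by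
      rintro σ ⟨p, q, hpq, rfl⟩
      rcases hmemx p with rfl|rfl|rfl <;> rcases hmemx q with rfl|rfl|rfl
      · exact absurd rfl hpq
      · exact ⟨⟨_, hc3K⟩, hφc3⟩
      · exact ⟨⟨_, hbK⟩, hφb⟩
      · rw [Equiv.swap_comm]; exact ⟨⟨_, hc3K⟩, hφc3⟩
      · exact absurd rfl hpq
      · exact ⟨⟨_, haK⟩, hφa⟩
      · rw [Equiv.swap_comm]; exact ⟨⟨_, hbK⟩, hφb⟩
      · rw [Equiv.swap_comm]; exact ⟨⟨_, haK⟩, hφa⟩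
      · exact absurd rfl hpq
    intro σ
    have hσ : σ ∈ Subgroup.closure {σ : Equiv.Perm ↥{g : G | orderOf g = 2} | σ.IsSwap} := by
      rw [Equiv.Perm.closure_isSwap]; trivial
    exact (Subgroup.closure_le ψ.range).mpr hswap hσ
  have hψsurj : Function.Surjective ψ := fun σ => hψrange σ
  have e1 : K ≃* Equiv.Perm ↥{g : G | orderOf g = 2} :=
    MulEquiv.ofBijective ψ ⟨hψinj, hψsurj⟩
  have eF : ↥{g : G | orderOf g = 2} ≃ Fin 3 := Finite.equivFinOfCardEq hcard3
  have e2 : Equiv.Perm ↥{g : G | orderOf g = 2} ≃* Equiv.Perm (Fin 3) :=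
    { toEquiv := eF.permCongr
      map_mul' := fun p q => by
        ext z
        simp [Equiv.permCongr_apply, Equiv.Perm.mul_apply] }
  refine ⟨⟨e1.trans e2⟩, ?_⟩
  -- Part 2 : G ≃ C × K
  have hCmem : ∀ g : G, g ∈ C ↔ ∀ h ∈ K, h * g = g * h := by
    intro g; rw [hC]; exact Subgroup.mem_centralizer_iff
  have hkerC : ∀ g : G, φ g = 1 → g ∈ C := by
    intro g hg
    refine (hCmem g).mpr ?_
    intro h hh
    rw [hK] at hh
    induction hh using Subgroup.closure_induction with
    | mem x hx =>
        have h1 : ((φ g) ⟨x, hx⟩ : G) = x := by rw [hg]; rfl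
        have h2 : g * x * g⁻¹ = x := h1
        exact (mul_inv_eq_iff_eq_mul.mp h2).symm
    | one => rw [one_mul, mul_one]
    | mul x y hx hy hx' hy' => rw [mul_assoc, hy', ← mul_assoc, hx', mul_assoc]
    | inv x hx hx' => exact Commute.inv_left hx'
  have hcomm : ∀ (c' : C) (k : K), Commute (C.subtype c') (K.subtype k) := by
    intro c' k
    exact ((hCmem c').mp c'.2 (k : G) k.2).symm
  set θ : C × K →* G := MonoidHom.noncommCoprod C.subtype K.subtype hcomm with hθdef
  have hθinj : Function.Injective θ := by
    apply (injective_iff_map_eq_one θ).mpr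
    rintro ⟨c', k⟩ h
    have h' : (c' : G) * (k : G) = 1 := h
    have hck : (c' : G) = (k : G)⁻¹ := eq_inv_of_mul_eq_one_left h'
    have hcK : (c' : G) ∈ K := hck ▸ K.inv_mem k.2
    have h1 : (c' : G) * a = a * (c' : G) := ((hCmem c').mp c'.2 a haK).symm
    have h2 : (c' : G) * b = b * (c' : G) := ((hCmem c').mp c'.2 b hbK).symm
    have hc1 : (c' : G) = 1 := hcent1 _ (hKT _ hcK) h1 h2
    have hk1 : (k : G) = 1 := by rw [hc1, one_mul] at h'; exact h'
    exact Prod.ext (Subtype.ext hc1) (Subtype.ext hk1)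
  have hθsurj : Function.Surjective θ := by
    intro g
    obtain ⟨k, hk⟩ := hψsurj (φ g)
    have hφk : φ ((k : K) : G) = φ g := hk
    refine ⟨(⟨g * (k : G)⁻¹, ?_⟩, k), ?_⟩
    · apply hkerC
      rw [map_mul, map_inv, hφk, mul_inv_cancel]
    · show (g * (k : G)⁻¹) * (k : G) = g
      exact inv_mul_cancel_right g (k : G)
  exact ⟨(MulEquiv.ofBijective θ ⟨hθinj, hθsurj⟩).symm⟩
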